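/- In the deterministic service model, for all r, t ∈ ℕ, every finite multiset M of deadlines, and all deadlines d, d' ∈ ℕ with d ≤ d', one has V(r, t, d' ::ₘ M) ≤ V(r, t, d ::ₘ M); that is, the state retaining the customer with the later deadline has value at most that of the state retaining the customer with the earlier deadline, so it is beneficial to serve the more urgent customer first. -/

import Mathlib

/-- Inconvenience function: `f η t d = η^(t-d+1)` if the deadline `d` is due
(`d ≤ t`), and `0` otherwise. -/
noncomputable def inconvenience (η : ℝ) (t d : ℕ) : ℝ :=
  if d ≤ t then η ^ (t - d + 1) else 0

/-- Value function of the deterministic service model: over `r` remaining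
periods, starting in period `t` with multiset `M` of customer deadlines and
per-period service capacity `m`, the minimal accumulated inconvenience.
`V η m 0 t M = 0` and
`V η m (r+1) t M = min over submultisets A ≤ M with card A ≤ m of
  [∑_{d ∈ M - A} f(t,d) + V η m r (t+1) (M - A)]`. -/
noncomputable def V (η : ℝ) (m : ℕ) : ℕ → ℕ → Multiset ℕ → ℝ
  | 0, _, _ => 0
  | r + 1, t, M =>
      ⨅ A : {A : Multiset ℕ // A ≤ M ∧ Multiset.card A ≤ m},
        (((M - A.1).map (inconvenience η t)).sum + V η m r (t + 1) (M - A.1))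

lemma inconvenience_nonneg {η : ℝ} (hη : 1 < η) (t d : ℕ) :
    0 ≤ inconvenience η t d := by
  unfold inconvenience
  split
  · positivity
  · exact le_rfl

lemma inconvenience_anti {η : ℝ} (hη : 1 < η) (t : ℕ) {d d' : ℕ} (h : d ≤ d') :
    inconvenience η t d' ≤ inconvenience η t d := by
  unfold inconvenience
  by_cases h' : d' ≤ t
  · rw [if_pos h', if_pos (h.trans h')]
    exact pow_le_pow_right₀ (le_of_lt hη) (by omega)
  · rw [if_neg h']
    have := inconvenience_nonneg hη t d
    unfold inconvenience at this
    exact this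

lemma V_nonneg {η : ℝ} (hη : 1 < η) (m : ℕ) :
    ∀ r t M, 0 ≤ V η m r t M := by
  intro r
  induction r with
  | zero => intro t M; simp [V]
  | succ r ih =>
    intro t M
    haveI : Nonempty {A : Multiset ℕ // A ≤ M ∧ Multiset.card A ≤ m} :=
      ⟨⟨0, zero_le, by simp⟩⟩
    rw [V]
    refine le_ciInf fun A => add_nonneg ?_ (ih _ _)
    refine Multiset.sum_nonneg fun x hx => ?_
    obtain ⟨a, _, rfl⟩ := Multiset.mem_map.mp hx
    exact inconvenience_nonneg hη t a

lemma V_bdd {η : ℝ} (hη : 1 < η) (m r t : ℕ) (M : Multiset ℕ) :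
    BddBelow (Set.range fun A : {A : Multiset ℕ // A ≤ M ∧ Multiset.card A ≤ m} =>
      (((M - A.1).map (inconvenience η t)).sum + V η m r (t + 1) (M - A.1))) := by
  refine ⟨0, ?_⟩
  rintro x ⟨A, rfl⟩
  refine add_nonneg ?_ (V_nonneg hη m _ _ _)
  refine Multiset.sum_nonneg fun x hx => ?_
  obtain ⟨a, _, rfl⟩ := Multiset.mem_map.mp hx
  exact inconvenience_nonneg hη t a

/-- Retaining the customer with the later deadline yields a value at most that
of retaining the customer with the earlier deadline: it is beneficial to serve
the more urgent customer first (Corollary 1). -/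
theorem value_serve_urgent_first (η : ℝ) (hη : 1 < η) (m : ℕ)
    (r t : ℕ) (M : Multiset ℕ) (d d' : ℕ) (hdd' : d ≤ d') :
    V η m r t (d' ::ₘ M) ≤ V η m r t (d ::ₘ M) := by
  induction r generalizing t M with
  | zero => simp [V]
  | succ r ih =>
    haveI : Nonempty {A : Multiset ℕ // A ≤ d ::ₘ M ∧ Multiset.card A ≤ m} :=
      ⟨⟨0, zero_le, by simp⟩⟩
    rw [V, V]
    refine le_ciInf fun B => ?_
    obtain ⟨B, hBle, hBcard⟩ := B
    by_cases hd : d ∈ B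
    · -- serve d' instead of d
      have hB'le : B.erase d ≤ M := by
        have := Multiset.erase_le_erase d hBle
        rwa [Multiset.erase_cons_head] at this
      have hBeq : B = d ::ₘ B.erase d := (Multiset.cons_erase hd).symm
      refine ciInf_le_of_le (V_bdd hη m r t _)
        ⟨d' ::ₘ B.erase d, Multiset.cons_le_cons _ hB'le, ?_⟩ ?_
      · have : Multiset.card B = Multiset.card (B.erase d) + 1 := by
          rw [hBeq]; simp
        simpa using by omega
      · have h1 : d' ::ₘ M - (d' ::ₘ B.erase d) = M - B.erase d := by
          rw [Multiset.sub_cons, Multiset.erase_cons_head]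
        have h2 : d ::ₘ M - B = M - B.erase d := by
          conv_lhs => rw [hBeq]
          rw [Multiset.sub_cons, Multiset.erase_cons_head]
        rw [h1, h2]
    · -- B avoids d, so B ≤ M; keep serving B, left with d' resp. d
      have hBM : B ≤ M := by
        rw [Multiset.le_iff_count] at hBle ⊢
        intro a
        rcases eq_or_ne a d with rfl | hne
        · simp [Multiset.count_eq_zero.2 hd]
        · have := hBle a
          rwa [Multiset.count_cons_of_ne hne] at this
      refine ciInf_le_of_le (V_bdd hη m r t _)
        ⟨B, hBM.trans (Multiset.le_cons_self _ _), hBcard⟩ ?_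
      rw [Multiset.cons_sub_of_le _ hBM, Multiset.cons_sub_of_le _ hBM,
        Multiset.map_cons, Multiset.map_cons, Multiset.sum_cons, Multiset.sum_cons]
      have h1 := inconvenience_anti hη t hdd'
      have h2 := ih (t + 1) (M - B)
      have h3 : ((M - B).map (inconvenience η t)).sum ≤
          ((M - B).map (inconvenience η t)).sum := le_rfl
      linarith
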